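/- If φ∈C(X,ℝ) and α is an open cover of the compact metric space X, then the sequence n ↦ p_n(φ,α) is submultiplicative: p_{n_1+n_2}(φ,α) ≤ p_{n_1}(φ,α)·p_{n_2}(φ,α) for all n_1,n_2 ≥ 1; consequently lim_{n→∞}(1/n) log p_n(φ,α) exists and equals inf_n (1/n) log p_n(φ,α). -/

import Mathlib

open Filter Topology MeasureTheory Set

set_option linter.unusedSectionVars false
set_option maxHeartbeats 400000

namespace FSA

/-- `f_w = f_{w₁} ∘ ⋯ ∘ f_{w_k}` for the word `w = [w₁,…,w_k]`; the empty word acts as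
the identity. -/
def wordMap {X : Type*} {ι : Type*} (f : ι → X → X) : List ι → X → X
  | [] => id
  | a :: t => f a ∘ wordMap f t

/-- `(S_wφ)(x) = Σ_{w'} φ(f_{w'}x)`, summing over the `|w|` words `w'` consisting of the
empty word and the proper suffixes of `w`. -/
noncomputable def birkhoff {X : Type*} {ι : Type*} (f : ι → X → X) (φ : X → ℝ)
    (w : List ι) (x : X) : ℝ :=
  (w.tails.tail.map fun w' => φ (wordMap f w' x)).sum

section Cover

variable {X : Type*} {ι : Type*}

/-- `α` is an open cover of `X`. -/
def IsOpenCover [TopologicalSpace X] (α : Set (Set X)) : Prop :=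
  (∀ A ∈ α, IsOpen A) ∧ ⋃₀ α = Set.univ

/-- The members of the join `⋁_{w'≤w} f_{w'}⁻¹ α`, the join taken over the `|w|` words `w'`
consisting of the empty word and the proper suffixes of `w`. -/
def coverJoin (f : ι → X → X) (α : Set (Set X)) (w : List ι) : Set (Set X) :=
  {B | ∃ c : List ι → Set X, (∀ w' ∈ w.tails.tail, c w' ∈ α) ∧
    B = ⋂ w' ∈ w.tails.tail, wordMap f w' ⁻¹' c w'}

/-- `β` is a finite subcover of the join `⋁_{w'≤w} f_{w'}⁻¹ α`. -/
def IsFiniteSubcover (f : ι → X → X) (α : Set (Set X)) (w : List ι)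
    (β : Finset (Set X)) : Prop :=
  (↑β : Set (Set X)) ⊆ coverJoin f α w ∧ ⋃₀ (↑β : Set (Set X)) = Set.univ

/-- `q_w(φ,α) = inf { Σ_{B∈β} inf_{x∈B} e^{(S_wφ)(x)} : β a finite subcover }`. -/
noncomputable def qword (f : ι → X → X) (φ : X → ℝ) (α : Set (Set X)) (w : List ι) : ℝ :=
  sInf {s : ℝ | ∃ β : Finset (Set X), IsFiniteSubcover f α w β ∧
    s = ∑ B ∈ β, sInf ((fun x => Real.exp (birkhoff f φ w x)) '' B)}

/-- `p_w(φ,α) = inf { Σ_{B∈β} sup_{x∈B} e^{(S_wφ)(x)} : β a finite subcover }`. -/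
noncomputable def pword (f : ι → X → X) (φ : X → ℝ) (α : Set (Set X)) (w : List ι) : ℝ :=
  sInf {s : ℝ | ∃ β : Finset (Set X), IsFiniteSubcover f α w β ∧
    s = ∑ B ∈ β, sSup ((fun x => Real.exp (birkhoff f φ w x)) '' B)}

/-- `q_n(φ,α) = m^{-n} Σ_{|w|=n} q_w(φ,α)`. -/
noncomputable def qn [Fintype ι] (f : ι → X → X) (φ : X → ℝ) (α : Set (Set X)) (n : ℕ) : ℝ :=
  (1 / (Fintype.card ι : ℝ) ^ n) * ∑ w : Fin n → ι, qword f φ α (List.ofFn w)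

/-- `p_n(φ,α) = m^{-n} Σ_{|w|=n} p_w(φ,α)`. -/
noncomputable def pn [Fintype ι] (f : ι → X → X) (φ : X → ℝ) (α : Set (Set X)) (n : ℕ) : ℝ :=
  (1 / (Fintype.card ι : ℝ) ^ n) * ∑ w : Fin n → ι, pword f φ α (List.ofFn w)

end Cover

/-! ### Auxiliary list and Birkhoff-sum lemmas -/

section Aux

variable {X : Type*} {ι : Type*}

lemma wordMap_append (f : ι → X → X) (a b : List ι) :
    wordMap f (a ++ b) = wordMap f a ∘ wordMap f b := by
  induction a with
  | nil => rfl
  | cons i t ih =>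
    show f i ∘ wordMap f (t ++ b) = (f i ∘ wordMap f t) ∘ wordMap f b
    rw [ih, Function.comp_assoc]

lemma tails_self_cons (l : List ι) : l.tails = l :: l.tails.tail := by
  cases l <;> simp

lemma tails_tail_append (a b : List ι) :
    (a ++ b).tails.tail = (a.tails.tail.map fun l => l ++ b) ++ b.tails.tail := by
  rw [List.tails_append]
  conv_lhs => rw [tails_self_cons a]
  simp

lemma length_lt_of_mem_tails_tail : ∀ {l u : List ι}, u ∈ l.tails.tail → u.length < l.length
  | [], u, h => by simp at h
  | a :: t, u, h => by
    rw [List.tails_cons] at h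
    exact lt_of_le_of_lt (List.IsSuffix.length_le ((List.mem_tails _ _).1 h)) (by simp)

lemma birkhoff_nil (f : ι → X → X) (φ : X → ℝ) (x : X) : birkhoff f φ [] x = 0 := rfl

lemma birkhoff_cons (f : ι → X → X) (φ : X → ℝ) (i : ι) (t : List ι) (x : X) :
    birkhoff f φ (i :: t) x = φ (wordMap f t x) + birkhoff f φ t x := by
  unfold birkhoff
  rw [show (i :: t).tails.tail = t.tails by rw [List.tails_cons, List.tail_cons]]
  conv_lhs => rw [tails_self_cons t]
  rw [List.map_cons, List.sum_cons]

lemma birkhoff_append (f : ι → X → X) (φ : X → ℝ) (a b : List ι) (x : X) :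
    birkhoff f φ (a ++ b) x = birkhoff f φ b x + birkhoff f φ a (wordMap f b x) := by
  unfold birkhoff
  rw [tails_tail_append, List.map_append, List.sum_append, List.map_map, add_comm]
  congr 1
  refine congrArg List.sum (List.map_congr_left fun v _ => ?_)
  simp [wordMap_append]

lemma abs_birkhoff_le {φ : X → ℝ} {C : ℝ} (f : ι → X → X) (hC : ∀ x, |φ x| ≤ C) :
    ∀ (w : List ι) (x : X), |birkhoff f φ w x| ≤ w.length * C := by
  intro w
  induction w with
  | nil => intro x; simp [birkhoff_nil]
  | cons i t ih =>
    intro x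
    rw [birkhoff_cons]
    calc |φ (wordMap f t x) + birkhoff f φ t x| ≤ |φ (wordMap f t x)| + |birkhoff f φ t x| :=
          abs_add_le _ _
      _ ≤ C + t.length * C := add_le_add (hC _) (ih x)
      _ = (i :: t).length * C := by simp [List.length_cons]; ring

lemma continuous_wordMap [TopologicalSpace X] {f : ι → X → X} (hf : ∀ i, Continuous (f i)) :
    ∀ w : List ι, Continuous (wordMap f w)
  | [] => continuous_id
  | i :: t => (hf i).comp (continuous_wordMap hf t)

/-- Sums over images are at most sums over the original finset, for nonnegative summands. -/
lemma sum_image_le_sum {γ δ : Type*} [DecidableEq δ] (s : Finset γ) (g : γ → δ)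
    (F : δ → ℝ) (h0 : ∀ b, 0 ≤ F b) :
    ∑ b ∈ s.image g, F b ≤ ∑ p ∈ s, F (g p) := by
  classical
  induction s using Finset.induction_on with
  | empty => simp
  | insert _ _ hnot ih =>
    rename_i a s
    rw [Finset.image_insert, Finset.sum_insert hnot]
    by_cases h : g a ∈ s.image g
    · rw [Finset.insert_eq_self.2 h]
      exact le_add_of_nonneg_of_le (h0 _) ih
    · rw [Finset.sum_insert h]
      exact add_le_add_right ih _

end Aux

/-! ### The set appearing in the definition of `pword` -/

/-- The set of which `pword f φ α w` is the infimum. -/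
noncomputable def Pset {X : Type*} {ι : Type*} (f : ι → X → X) (φ : X → ℝ)
    (α : Set (Set X)) (w : List ι) : Set ℝ :=
  {s : ℝ | ∃ β : Finset (Set X), IsFiniteSubcover f α w β ∧
    s = ∑ B ∈ β, sSup ((fun x => Real.exp (birkhoff f φ w x)) '' B)}

lemma pword_eq_sInf_Pset {X : Type*} {ι : Type*} (f : ι → X → X) (φ : X → ℝ)
    (α : Set (Set X)) (w : List ι) : pword f φ α w = sInf (Pset f φ α w) := rfl

section Main

variable {X : Type*} [TopologicalSpace X] [CompactSpace X] {ι : Type*}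
variable {f : ι → X → X} {φ : X → ℝ} {α : Set (Set X)} {C : ℝ}

lemma coverJoin_isOpen (hf : ∀ i, Continuous (f i)) (hα : IsOpenCover α) {w : List ι}
    {B : Set X} (hB : B ∈ coverJoin f α w) : IsOpen B := by
  obtain ⟨c, hc, rfl⟩ := hB
  exact Set.Finite.isOpen_biInter (List.finite_toSet _)
    (fun u hu => (hα.1 _ (hc u hu)).preimage (continuous_wordMap hf u))

lemma coverJoin_cover (hα : IsOpenCover α) (w : List ι) (x : X) :
    ∃ B ∈ coverJoin f α w, x ∈ B := by
  have hchoice : ∀ u : List ι, ∃ A, A ∈ α ∧ wordMap f u x ∈ A := by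
    intro u
    have hx : wordMap f u x ∈ ⋃₀ α := by rw [hα.2]; exact Set.mem_univ _
    obtain ⟨A, hA, hxA⟩ := hx
    exact ⟨A, hA, hxA⟩
  choose c hc1 hc2 using hchoice
  exact ⟨⋂ w' ∈ w.tails.tail, wordMap f w' ⁻¹' c w', ⟨c, fun u _ => hc1 u, rfl⟩,
    Set.mem_iInter₂.2 fun u _ => hc2 u⟩

lemma exists_isFiniteSubcover (hf : ∀ i, Continuous (f i)) (hα : IsOpenCover α) (w : List ι) :
    ∃ β : Finset (Set X), IsFiniteSubcover f α w β := by
  have hcov : (Set.univ : Set X) ⊆ ⋃ B ∈ coverJoin f α w, id B := by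
    intro x _
    obtain ⟨B, hB, hxB⟩ := coverJoin_cover hα w x
    exact Set.mem_biUnion hB hxB
  obtain ⟨b', hb'sub, hb'fin, hb'cov⟩ := isCompact_univ.elim_finite_subcover_image
    (fun B hB => coverJoin_isOpen hf hα hB) hcov
  refine ⟨hb'fin.toFinset, ?_, ?_⟩
  · rw [Set.Finite.coe_toFinset]; exact hb'sub
  · apply Set.eq_univ_of_univ_subset
    rw [Set.Finite.coe_toFinset, Set.sUnion_eq_biUnion]
    simpa using hb'cov

lemma Pset_nonempty (hf : ∀ i, Continuous (f i)) (hα : IsOpenCover α) (w : List ι) :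
    (Pset f φ α w).Nonempty := by
  obtain ⟨β, hβ⟩ := exists_isFiniteSubcover hf hα w
  exact ⟨_, β, hβ, rfl⟩

lemma sSup_img_nonneg (w : List ι) (B : Set X) :
    0 ≤ sSup ((fun x => Real.exp (birkhoff f φ w x)) '' B) := by
  apply Real.sSup_nonneg
  rintro _ ⟨x, _, rfl⟩
  exact (Real.exp_pos _).le

lemma bddAbove_img (hC : ∀ x, |φ x| ≤ C) (w : List ι) (B : Set X) :
    BddAbove ((fun x => Real.exp (birkhoff f φ w x)) '' B) := by
  refine ⟨Real.exp (w.length * C), ?_⟩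
  rintro _ ⟨x, _, rfl⟩
  exact Real.exp_le_exp.2 ((abs_le.1 (abs_birkhoff_le f hC w x)).2)

lemma le_sSup_img (hC : ∀ x, |φ x| ≤ C) {w : List ι} {B : Set X} {x : X} (hx : x ∈ B) :
    Real.exp (birkhoff f φ w x) ≤ sSup ((fun x => Real.exp (birkhoff f φ w x)) '' B) :=
  le_csSup (bddAbove_img hC w B) ⟨x, hx, rfl⟩

lemma Pset_bddBelow (w : List ι) : BddBelow (Pset f φ α w) := by
  refine ⟨0, ?_⟩
  rintro _ ⟨β, hβ, rfl⟩
  exact Finset.sum_nonneg fun B _ => sSup_img_nonneg w B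

lemma mem_Pset_lb [Nonempty X] (hC : ∀ x, |φ x| ≤ C) {w : List ι} {s : ℝ}
    (hs : s ∈ Pset f φ α w) : Real.exp (-(w.length * C)) ≤ s := by
  obtain ⟨β, hβ, rfl⟩ := hs
  obtain ⟨x₀⟩ := ‹Nonempty X›
  have hx : x₀ ∈ ⋃₀ (↑β : Set (Set X)) := by rw [hβ.2]; exact Set.mem_univ _
  obtain ⟨B, hB, hxB⟩ := hx
  calc Real.exp (-(w.length * C)) ≤ Real.exp (birkhoff f φ w x₀) :=
        Real.exp_le_exp.2 (neg_le.1 (neg_le.2 ((abs_le.1 (abs_birkhoff_le f hC w x₀)).1)))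
    _ ≤ sSup ((fun x => Real.exp (birkhoff f φ w x)) '' B) := le_sSup_img hC hxB
    _ ≤ ∑ B ∈ β, sSup ((fun x => Real.exp (birkhoff f φ w x)) '' B) :=
        Finset.single_le_sum (fun B _ => sSup_img_nonneg w B) (Finset.mem_coe.1 hB)

lemma exp_le_pword [Nonempty X] (hf : ∀ i, Continuous (f i)) (hα : IsOpenCover α)
    (hC : ∀ x, |φ x| ≤ C) (w : List ι) :
    Real.exp (-(w.length * C)) ≤ pword f φ α w :=
  le_csInf (Pset_nonempty hf hα w) fun _ hs => mem_Pset_lb hC hs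


lemma pword_le_mul_mem [Nonempty X] (hC : ∀ x, |φ x| ≤ C) {w₁ w₂ : List ι} {s₁ s₂ : ℝ}
    (h₁ : s₁ ∈ Pset f φ α w₁) (h₂ : s₂ ∈ Pset f φ α w₂) :
    pword f φ α (w₁ ++ w₂) ≤ s₁ * s₂ := by
  classical
  obtain ⟨β₁, hβ₁, rfl⟩ := h₁
  obtain ⟨β₂, hβ₂, rfl⟩ := h₂
  set g : Set X × Set X → Set X := fun p => wordMap f w₂ ⁻¹' p.1 ∩ p.2 with hg
  set β : Finset (Set X) := (β₁ ×ˢ β₂).image g with hβdef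
  have htake : ∀ v : List ι, (v ++ w₂).take ((v ++ w₂).length - w₂.length) = v := by
    intro v; rw [List.length_append, Nat.add_sub_cancel, List.take_left]
  have hcover : IsFiniteSubcover f α (w₁ ++ w₂) β := by
    constructor
    · intro B hB
      rw [hβdef, Finset.coe_image, Set.mem_image] at hB
      obtain ⟨p, hp, rfl⟩ := hB
      rw [Finset.mem_coe, Finset.mem_product] at hp
      obtain ⟨c₁, hc₁, hB₁⟩ := hβ₁.1 hp.1
      obtain ⟨c₂, hc₂, hB₂⟩ := hβ₂.1 hp.2
      set c : List ι → Set X :=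
        fun u => if w₂.length ≤ u.length then c₁ (u.take (u.length - w₂.length)) else c₂ u
        with hcdef
      have hcval1 : ∀ v : List ι, c (v ++ w₂) = c₁ v := by
        intro v
        simp only [hcdef]
        rw [if_pos (show w₂.length ≤ (v ++ w₂).length by simp), htake v]
      have hcval2 : ∀ u ∈ w₂.tails.tail, c u = c₂ u := by
        intro u hu
        simp only [hcdef]
        rw [if_neg (not_le.2 (length_lt_of_mem_tails_tail hu))]
      refine ⟨c, ?_, ?_⟩
      · intro u hu
        rw [tails_tail_append, List.mem_append] at hu
        rcases hu with hu | hu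
        · obtain ⟨v, hv, rfl⟩ := List.mem_map.1 hu
          rw [hcval1 v]
          exact hc₁ v hv
        · rw [hcval2 u hu]
          exact hc₂ u hu
      · show g p = _
        rw [hg]
        simp only
        rw [hB₁, hB₂]
        ext x
        constructor
        · rintro ⟨hx1, hx2⟩
          refine Set.mem_iInter₂.2 fun u hu => ?_
          rw [tails_tail_append, List.mem_append] at hu
          rcases hu with hu | hu
          · obtain ⟨v, hv, rfl⟩ := List.mem_map.1 hu
            rw [Set.mem_preimage, hcval1 v, wordMap_append]
            exact Set.mem_iInter₂.1 (Set.mem_preimage.1 hx1) v hv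
          · rw [Set.mem_preimage, hcval2 u hu]
            exact Set.mem_iInter₂.1 hx2 u hu
        · intro h
          have h' := Set.mem_iInter₂.1 h
          constructor
          · rw [Set.mem_preimage]
            refine Set.mem_iInter₂.2 fun v hv => ?_
            have hmem : v ++ w₂ ∈ (w₁ ++ w₂).tails.tail := by
              rw [tails_tail_append, List.mem_append]
              exact Or.inl (List.mem_map_of_mem hv)
            have hv' := h' (v ++ w₂) hmem
            rw [Set.mem_preimage, hcval1 v, wordMap_append] at hv'
            exact hv'
          · refine Set.mem_iInter₂.2 fun u hu => ?_
            have hmem : u ∈ (w₁ ++ w₂).tails.tail := by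
              rw [tails_tail_append, List.mem_append]
              exact Or.inr hu
            have hu' := h' u hmem
            rwa [Set.mem_preimage, hcval2 u hu] at hu'
    · refine Set.eq_univ_of_forall fun x => ?_
      have hx₂ : x ∈ ⋃₀ (↑β₂ : Set (Set X)) := by rw [hβ₂.2]; exact Set.mem_univ _
      obtain ⟨B₂, hB₂, hxB₂⟩ := hx₂
      have hx₁ : wordMap f w₂ x ∈ ⋃₀ (↑β₁ : Set (Set X)) := by rw [hβ₁.2]; exact Set.mem_univ _
      obtain ⟨B₁, hB₁, hxB₁⟩ := hx₁
      refine ⟨g (B₁, B₂), ?_, hxB₁, hxB₂⟩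
      rw [hβdef, Finset.mem_coe]
      exact Finset.mem_image.2 ⟨(B₁, B₂),
        Finset.mem_product.2 ⟨Finset.mem_coe.1 hB₁, Finset.mem_coe.1 hB₂⟩, rfl⟩
  have key : ∀ p : Set X × Set X,
      sSup ((fun x => Real.exp (birkhoff f φ (w₁ ++ w₂) x)) '' g p) ≤
        sSup ((fun x => Real.exp (birkhoff f φ w₁ x)) '' p.1) *
          sSup ((fun x => Real.exp (birkhoff f φ w₂ x)) '' p.2) := by
    intro p
    refine Real.sSup_le ?_ (mul_nonneg (sSup_img_nonneg w₁ p.1) (sSup_img_nonneg w₂ p.2))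
    rintro _ ⟨x, ⟨hx1, hx2⟩, rfl⟩
    show Real.exp (birkhoff f φ (w₁ ++ w₂) x) ≤ _
    rw [birkhoff_append, Real.exp_add, mul_comm]
    exact mul_le_mul (le_sSup_img hC hx1) (le_sSup_img hC hx2)
      (Real.exp_pos _).le (sSup_img_nonneg w₁ p.1)
  have c1 : pword f φ α (w₁ ++ w₂) ≤ ∑ B ∈ β, sSup ((fun x => Real.exp (birkhoff f φ (w₁ ++ w₂) x)) '' B) :=
    csInf_le (Pset_bddBelow _) ⟨β, hcover, rfl⟩
  have c2 : ∑ B ∈ β, sSup ((fun x => Real.exp (birkhoff f φ (w₁ ++ w₂) x)) '' B)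
      ≤ ∑ p ∈ β₁ ×ˢ β₂, sSup ((fun x => Real.exp (birkhoff f φ (w₁ ++ w₂) x)) '' g p) := by
    rw [hβdef]
    exact sum_image_le_sum _ _ _ fun B => sSup_img_nonneg _ B
  have c3 : ∑ p ∈ β₁ ×ˢ β₂, sSup ((fun x => Real.exp (birkhoff f φ (w₁ ++ w₂) x)) '' g p)
      ≤ ∑ p ∈ β₁ ×ˢ β₂, sSup ((fun x => Real.exp (birkhoff f φ w₁ x)) '' p.1) *
          sSup ((fun x => Real.exp (birkhoff f φ w₂ x)) '' p.2) :=
    Finset.sum_le_sum fun p _ => key p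
  have c4 : ∑ p ∈ β₁ ×ˢ β₂, sSup ((fun x => Real.exp (birkhoff f φ w₁ x)) '' p.1) *
          sSup ((fun x => Real.exp (birkhoff f φ w₂ x)) '' p.2)
      = (∑ B ∈ β₁, sSup ((fun x => Real.exp (birkhoff f φ w₁ x)) '' B)) *
          (∑ B ∈ β₂, sSup ((fun x => Real.exp (birkhoff f φ w₂ x)) '' B)) :=
    by
      rw [Finset.sum_product]
      exact (Finset.sum_mul_sum β₁ β₂
        (fun B => sSup ((fun x => Real.exp (birkhoff f φ w₁ x)) '' B))
        (fun B => sSup ((fun x => Real.exp (birkhoff f φ w₂ x)) '' B))).symm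
  exact le_trans c1 (le_trans c2 (le_trans c3 (le_of_eq c4)))

lemma pword_append_le [Nonempty X] (hf : ∀ i, Continuous (f i)) (hα : IsOpenCover α)
    (hC : ∀ x, |φ x| ≤ C) (w₁ w₂ : List ι) :
    pword f φ α (w₁ ++ w₂) ≤ pword f φ α w₁ * pword f φ α w₂ := by
  have hp1pos : 0 < pword f φ α w₁ :=
    lt_of_lt_of_le (Real.exp_pos _) (exp_le_pword hf hα hC w₁)
  have step1 : ∀ s₂ ∈ Pset f φ α w₂, pword f φ α (w₁ ++ w₂) ≤ pword f φ α w₁ * s₂ := by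
    intro s₂ hs₂
    have hs₂pos : 0 < s₂ := lt_of_lt_of_le (Real.exp_pos _) (mem_Pset_lb hC hs₂)
    rw [← div_le_iff₀ hs₂pos]
    refine le_csInf (Pset_nonempty hf hα w₁) fun s₁ hs₁ => ?_
    rw [div_le_iff₀ hs₂pos]
    exact pword_le_mul_mem hC hs₁ hs₂
  rw [show pword f φ α w₂ = sInf (Pset f φ α w₂) from rfl, ← div_le_iff₀' hp1pos]
  refine le_csInf (Pset_nonempty hf hα w₂) fun s₂ hs₂ => ?_
  rw [div_le_iff₀' hp1pos]
  exact step1 s₂ hs₂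

lemma pn_submul [Fintype ι] [Nonempty ι] [Nonempty X] (hf : ∀ i, Continuous (f i))
    (hα : IsOpenCover α) (hC : ∀ x, |φ x| ≤ C) (n₁ n₂ : ℕ) :
    pn f φ α (n₁ + n₂) ≤ pn f φ α n₁ * pn f φ α n₂ := by
  have hm : (0 : ℝ) < (Fintype.card ι : ℝ) := by exact_mod_cast Fintype.card_pos
  have hT : ∑ w : Fin (n₁ + n₂) → ι, pword f φ α (List.ofFn w)
      ≤ (∑ a : Fin n₁ → ι, pword f φ α (List.ofFn a)) *
        (∑ b : Fin n₂ → ι, pword f φ α (List.ofFn b)) := by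
    calc ∑ w : Fin (n₁ + n₂) → ι, pword f φ α (List.ofFn w)
        = ∑ p : (Fin n₁ → ι) × (Fin n₂ → ι), pword f φ α (List.ofFn (Fin.append p.1 p.2)) :=
          (Fintype.sum_equiv (Fin.appendEquiv n₁ n₂)
            (fun p => pword f φ α (List.ofFn (Fin.append p.1 p.2)))
            (fun w => pword f φ α (List.ofFn w)) (fun p => rfl)).symm
      _ ≤ ∑ p : (Fin n₁ → ι) × (Fin n₂ → ι),
            pword f φ α (List.ofFn p.1) * pword f φ α (List.ofFn p.2) :=
          Finset.sum_le_sum fun p _ => by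
            rw [List.ofFn_fin_append]
            exact pword_append_le hf hα hC _ _
      _ = (∑ a : Fin n₁ → ι, pword f φ α (List.ofFn a)) *
            (∑ b : Fin n₂ → ι, pword f φ α (List.ofFn b)) :=
          by
            rw [Fintype.sum_prod_type]
            exact (Fintype.sum_mul_sum (fun a : Fin n₁ → ι => pword f φ α (List.ofFn a))
              (fun b : Fin n₂ → ι => pword f φ α (List.ofFn b))).symm
  calc pn f φ α (n₁ + n₂)
      = (1 / (Fintype.card ι : ℝ) ^ (n₁ + n₂)) *
          ∑ w : Fin (n₁ + n₂) → ι, pword f φ α (List.ofFn w) := rfl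
    _ ≤ (1 / (Fintype.card ι : ℝ) ^ (n₁ + n₂)) *
          ((∑ a : Fin n₁ → ι, pword f φ α (List.ofFn a)) *
            (∑ b : Fin n₂ → ι, pword f φ α (List.ofFn b))) :=
        mul_le_mul_of_nonneg_left hT (by positivity)
    _ = pn f φ α n₁ * pn f φ α n₂ := by
        unfold pn
        rw [pow_add]
        ring

lemma exp_le_pn [Fintype ι] [Nonempty ι] [Nonempty X] (hf : ∀ i, Continuous (f i))
    (hα : IsOpenCover α) (hC : ∀ x, |φ x| ≤ C) (n : ℕ) :
    Real.exp (-(n * C)) ≤ pn f φ α n := by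
  classical
  have hm : (0 : ℝ) < (Fintype.card ι : ℝ) := by exact_mod_cast Fintype.card_pos
  have hcard : (Fintype.card (Fin n → ι) : ℝ) = (Fintype.card ι : ℝ) ^ n := by
    rw [Fintype.card_fun]; push_cast; simp
  have h1 : (Fintype.card ι : ℝ) ^ n * Real.exp (-(n * C))
      ≤ ∑ w : Fin n → ι, pword f φ α (List.ofFn w) := by
    calc (Fintype.card ι : ℝ) ^ n * Real.exp (-(n * C))
        = ∑ _w : Fin n → ι, Real.exp (-(n * C)) := by
          rw [Finset.sum_const, Finset.card_univ, nsmul_eq_mul, hcard]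
      _ ≤ ∑ w : Fin n → ι, pword f φ α (List.ofFn w) :=
          Finset.sum_le_sum fun w _ => by
            have h := exp_le_pword hf hα hC (List.ofFn w)
            rwa [List.length_ofFn] at h
  calc Real.exp (-(n * C))
      = (1 / (Fintype.card ι : ℝ) ^ n) * ((Fintype.card ι : ℝ) ^ n * Real.exp (-(n * C))) := by
        field_simp
    _ ≤ (1 / (Fintype.card ι : ℝ) ^ n) * ∑ w : Fin n → ι, pword f φ α (List.ofFn w) :=
        mul_le_mul_of_nonneg_left h1 (by positivity)
    _ = pn f φ α n := rfl


end Main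

/-- For an open cover `α`, `n ↦ p_n(φ,α)` is submultiplicative, and
consequently `lim_{n→∞} (1/n) log p_n(φ,α)` exists and equals
`inf_{n≥1} (1/n) log p_n(φ,α)`. -/
theorem stmt_5 {X : Type*} [MetricSpace X] [CompactSpace X] [Nonempty X]
    {ι : Type*} [Fintype ι] [Nonempty ι]
    (f : ι → X → X) (hf : ∀ i, Continuous (f i))
    (φ : X → ℝ) (hφ : Continuous φ)
    (α : Set (Set X)) (hα : IsOpenCover α) :
    (∀ n₁ n₂ : ℕ, 1 ≤ n₁ → 1 ≤ n₂ →
      pn f φ α (n₁ + n₂) ≤ pn f φ α n₁ * pn f φ α n₂) ∧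
    Filter.Tendsto (fun n : ℕ => Real.log (pn f φ α n) / (n : ℝ)) atTop
      (𝓝 (⨅ k : {k : ℕ // 0 < k}, Real.log (pn f φ α k.1) / (k.1 : ℝ))) := by
  obtain ⟨C, hC⟩ : ∃ C : ℝ, ∀ x, |φ x| ≤ C := by
    obtain ⟨C, hC⟩ := isCompact_univ.exists_bound_of_continuousOn hφ.continuousOn
    exact ⟨C, fun x => by simpa [Real.norm_eq_abs] using hC x (Set.mem_univ x)⟩
  have hpos : ∀ n, 0 < pn f φ α n := fun n =>
    lt_of_lt_of_le (Real.exp_pos _) (exp_le_pn hf hα hC n)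
  have hsubmul : ∀ n₁ n₂ : ℕ, pn f φ α (n₁ + n₂) ≤ pn f φ α n₁ * pn f φ α n₂ :=
    pn_submul hf hα hC
  refine ⟨fun n₁ n₂ _ _ => hsubmul n₁ n₂, ?_⟩
  have hsub : Subadditive fun n => Real.log (pn f φ α n) := by
    intro m n
    have h1 : Real.log (pn f φ α (m + n)) ≤ Real.log (pn f φ α m * pn f φ α n) :=
      Real.log_le_log (hpos _) (hsubmul m n)
    rwa [Real.log_mul (hpos m).ne' (hpos n).ne'] at h1
  have hbdd : BddBelow (Set.range fun n : ℕ => Real.log (pn f φ α n) / (n : ℝ)) := by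
    refine ⟨min (-C) 0, ?_⟩
    rintro _ ⟨n, rfl⟩
    rcases Nat.eq_zero_or_pos n with rfl | hn
    · simp only [Nat.cast_zero, div_zero]
      exact min_le_right _ _
    · have hnn : (0 : ℝ) < n := by exact_mod_cast hn
      have hlog : -((n : ℝ) * C) ≤ Real.log (pn f φ α n) := by
        have h := Real.log_le_log (Real.exp_pos _) (exp_le_pn hf hα hC n)
        rwa [Real.log_exp] at h
      refine le_trans (min_le_left _ _) ?_
      rw [le_div_iff₀ hnn]
      nlinarith [hlog]
  have hlim := hsub.tendsto_lim hbdd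
  have heq : hsub.lim = ⨅ k : {k : ℕ // 0 < k}, Real.log (pn f φ α k.1) / (k.1 : ℝ) := by
    rw [Subadditive.lim, iInf]
    congr 1
    ext y
    constructor
    · rintro ⟨n, hn, rfl⟩
      simp only [Set.mem_Ici] at hn
      exact ⟨⟨n, hn⟩, rfl⟩
    · rintro ⟨⟨n, hn⟩, rfl⟩
      exact ⟨n, Set.mem_Ici.2 hn, rfl⟩
  rw [← heq]
  exact hlim

end FSA
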